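/- Let ν ∈ (0,1), μ̄ ∈ ℝ, ξ̄ > 0, let Q be a random variable with law N(μ̄, ξ̄²), and let R be a real-valued random variable taking values almost surely in [0,1] and independent of Q. If K is an upper bound for |Φ_a''(U; ν, μ̄, ξ̄)| over U ∈ [0,1] (where the derivatives are with respect to U), then |P((1−ν)Q + ν(2R−1) > 0) − Φ_a(E[R]; ν, μ̄, ξ̄)| ≤ (K/2)·Var[R]. -/

import Mathlib

open MeasureTheory ProbabilityTheory

open Set

/-- The complementary error function `erfc x = (2/√π) ∫_x^∞ exp(−t²) dt`. -/
noncomputable def erfc (x : ℝ) : ℝ :=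
  (2 / Real.sqrt Real.pi) * ∫ t in Set.Ioi x, Real.exp (-t ^ 2)

lemma exp_neg_sq_eq : (fun t : ℝ => Real.exp (-t ^ 2)) = fun t : ℝ => Real.exp (-1 * t ^ 2) := by
  funext t; norm_num

lemma integrable_ens : Integrable (fun t : ℝ => Real.exp (-t ^ 2)) := by
  rw [exp_neg_sq_eq]; exact integrable_exp_neg_mul_sq one_pos

lemma integral_ens : (∫ t : ℝ, Real.exp (-t ^ 2)) = Real.sqrt Real.pi := by
  rw [exp_neg_sq_eq, integral_gaussian]; norm_num

noncomputable def erfcAux (x : ℝ) : ℝ := ∫ t in Set.Ioi x, Real.exp (-t ^ 2)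

lemma erfcAux_nonneg (x : ℝ) : 0 ≤ erfcAux x :=
  integral_nonneg fun _ => (Real.exp_pos _).le

lemma erfcAux_le (x : ℝ) : erfcAux x ≤ Real.sqrt Real.pi := by
  rw [← integral_ens]
  exact setIntegral_le_integral integrable_ens (Filter.Eventually.of_forall fun t => (Real.exp_pos _).le)

lemma hasDerivAt_erfcAux (x : ℝ) : HasDerivAt erfcAux (-Real.exp (-x ^ 2)) x := by
  have hint : Integrable (fun t : ℝ => Real.exp (-t ^ 2)) := integrable_ens
  have key : erfcAux = fun y => (∫ t : ℝ, Real.exp (-t ^ 2)) - ((∫ t in Iic (0:ℝ), Real.exp (-t ^ 2))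
      + ∫ t in (0:ℝ)..y, Real.exp (-t ^ 2)) := by
    funext y
    have h1 : (∫ t in Iic y, Real.exp (-t ^ 2)) + ∫ t in Ioi y, Real.exp (-t ^ 2)
        = ∫ t : ℝ, Real.exp (-t ^ 2) :=
      intervalIntegral.integral_Iic_add_Ioi hint.integrableOn hint.integrableOn
    have h2 : (∫ t in Iic y, Real.exp (-t ^ 2)) - ∫ t in Iic (0:ℝ), Real.exp (-t ^ 2)
        = ∫ t in (0:ℝ)..y, Real.exp (-t ^ 2) :=
      intervalIntegral.integral_Iic_sub_Iic hint.integrableOn hint.integrableOn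
    simp only [erfcAux]
    linarith
  rw [key]
  have h3 : HasDerivAt (fun y => ∫ t in (0:ℝ)..y, Real.exp (-t ^ 2)) (Real.exp (-x ^ 2)) x :=
    intervalIntegral.integral_hasDerivAt_right hint.intervalIntegrable
      hint.aestronglyMeasurable.stronglyMeasurableAtFilter (by fun_prop)
  exact (h3.const_add _).const_sub _

lemma deriv_erfcAux : deriv erfcAux = fun x => -Real.exp (-x ^ 2) := by
  funext x; exact (hasDerivAt_erfcAux x).deriv

lemma contDiff_erfcAux : ContDiff ℝ 2 erfcAux := by
  rw [show (2 : WithTop ℕ∞) = 1 + 1 by norm_num, contDiff_succ_iff_deriv]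
  refine ⟨fun x => (hasDerivAt_erfcAux x).differentiableAt, by simp, ?_⟩
  rw [deriv_erfcAux]
  fun_prop

lemma contDiff_erfc : ContDiff ℝ 2 erfc := by
  have h : erfc = fun x => (2 / Real.sqrt Real.pi) * erfcAux x := rfl
  rw [h]
  exact contDiff_const.mul contDiff_erfcAux

lemma iteratedDeriv_two (g : ℝ → ℝ) : iteratedDeriv 2 g = deriv (deriv g) := by
  rw [show (2:ℕ) = 1 + 1 from rfl, iteratedDeriv_succ, iteratedDeriv_one]

lemma taylor_bound {g : ℝ → ℝ} (hg : ContDiff ℝ 2 g) {K a b : ℝ}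
    (hK : ∀ t ∈ Set.uIcc a b, |iteratedDeriv 2 g t| ≤ K) :
    |g b - g a - deriv g a * (b - a)| ≤ K / 2 * (b - a) ^ 2 := by
  rw [iteratedDeriv_two] at hK
  rw [show (2 : WithTop ℕ∞) = 1 + 1 by norm_num, contDiff_succ_iff_deriv] at hg
  obtain ⟨hdiff, -, hg1⟩ := hg
  rw [show (1 : WithTop ℕ∞) = 0 + 1 by norm_num, contDiff_succ_iff_deriv] at hg1
  obtain ⟨hdiff1, -, hg0⟩ := hg1
  have hcont'' : Continuous (deriv (deriv g)) := contDiff_zero.mp hg0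
  set φ : ℝ → ℝ := fun t => deriv (deriv g) t * (b - t) with hφdef
  have hφc : Continuous φ := hcont''.mul (continuous_const.sub continuous_id)
  have hderiv : ∀ t : ℝ, HasDerivAt (fun u => g u + deriv g u * (b - u)) (φ t) t := by
    intro t
    have h1 : HasDerivAt g (deriv g t) t := (hdiff t).hasDerivAt
    have h2 : HasDerivAt (deriv g) (deriv (deriv g) t) t := (hdiff1 t).hasDerivAt
    have h3 : HasDerivAt (fun u : ℝ => b - u) (-1) t := by
      simpa using (hasDerivAt_id t).const_sub b
    have := h1.add (h2.mul h3)
    refine this.congr_deriv ?_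
    show _ = deriv (deriv g) t * (b - t)
    ring
  have key : g b - g a - deriv g a * (b - a) = ∫ t in a..b, φ t := by
    have := intervalIntegral.integral_eq_sub_of_hasDerivAt
      (f := fun u => g u + deriv g u * (b - u)) (fun t _ => hderiv t)
      (hφc.intervalIntegrable a b)
    rw [this]; ring_nf
  have hK0 : 0 ≤ K := le_trans (abs_nonneg _) (hK a Set.left_mem_uIcc)
  rw [key]
  rcases le_total a b with hab | hab
  · have huIcc : Set.uIcc a b = Set.Icc a b := Set.uIcc_of_le hab
    calc |∫ t in a..b, φ t| ≤ ∫ t in a..b, |φ t| :=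
          intervalIntegral.abs_integral_le_integral_abs hab
      _ ≤ ∫ t in a..b, K * (b - t) := by
          refine intervalIntegral.integral_mono_on hab (hφc.abs.intervalIntegrable a b)
            ((continuous_const.mul (continuous_const.sub continuous_id)).intervalIntegrable a b)
            (fun t ht => ?_)
          have hbt : 0 ≤ b - t := by linarith [ht.2]
          calc |φ t| = |deriv (deriv g) t| * (b - t) := by
                rw [hφdef]; rw [abs_mul, abs_of_nonneg hbt]
            _ ≤ K * (b - t) := by
                exact mul_le_mul_of_nonneg_right (hK t (huIcc ▸ ht)) hbt
      _ = K / 2 * (b - a) ^ 2 := by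
          rw [intervalIntegral.integral_const_mul, intervalIntegral.integral_sub
            (intervalIntegrable_const) (intervalIntegral.intervalIntegrable_id),
            intervalIntegral.integral_const, integral_id]
          simp only [smul_eq_mul]; ring
  · have huIcc : Set.uIcc a b = Set.Icc b a := Set.uIcc_of_ge hab
    rw [intervalIntegral.integral_symm, abs_neg]
    calc |∫ t in b..a, φ t| ≤ ∫ t in b..a, |φ t| :=
          intervalIntegral.abs_integral_le_integral_abs hab
      _ ≤ ∫ t in b..a, K * (t - b) := by
          refine intervalIntegral.integral_mono_on hab (hφc.abs.intervalIntegrable b a)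
            ((continuous_const.mul (continuous_id.sub continuous_const)).intervalIntegrable b a)
            (fun t ht => ?_)
          have hbt : 0 ≤ t - b := by linarith [ht.1]
          calc |φ t| = |deriv (deriv g) t| * (t - b) := by
                rw [hφdef]; rw [abs_mul, abs_sub_comm, abs_of_nonneg hbt]
            _ ≤ K * (t - b) := mul_le_mul_of_nonneg_right (hK t (huIcc ▸ ht)) hbt
      _ = K / 2 * (b - a) ^ 2 := by
          rw [intervalIntegral.integral_const_mul, intervalIntegral.integral_sub
            (intervalIntegral.intervalIntegrable_id) (intervalIntegrable_const),
            intervalIntegral.integral_const, integral_id]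
          simp only [smul_eq_mul]; ring

lemma integral_Ioi_comp_sub (g : ℝ → ℝ) (a c : ℝ) :
    ∫ x in Ioi a, g (x - c) = ∫ x in Ioi (a - c), g x := by
  rw [← integral_indicator measurableSet_Ioi, ← integral_indicator measurableSet_Ioi,
    ← integral_sub_right_eq_self (fun x => Set.indicator (Ioi (a - c)) g x) c]
  congr 1
  funext x
  simp only [Set.indicator_apply, Set.mem_Ioi, sub_lt_sub_iff_right]

lemma gauss_tail (μ : ℝ) {ξ : ℝ} (hξ : 0 < ξ) (a : ℝ) :
    (gaussianReal μ ⟨ξ ^ 2, sq_nonneg ξ⟩ (Set.Ioi a)).toReal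
      = (1 / 2) * erfc ((a - μ) / (ξ * Real.sqrt 2)) := by
  have hs : 0 < ξ * Real.sqrt 2 := by positivity
  have hv : (⟨ξ ^ 2, sq_nonneg ξ⟩ : NNReal) ≠ 0 := by
    intro h
    apply pow_ne_zero 2 hξ.ne'
    exact congrArg Subtype.val h
  rw [gaussianReal_apply_eq_integral _ hv,
    ENNReal.toReal_ofReal (integral_nonneg (μ := volume.restrict (Ioi a)) fun x =>
      gaussianPDFReal_nonneg μ (⟨ξ ^ 2, sq_nonneg ξ⟩ : NNReal) x)]
  set s := ξ * Real.sqrt 2 with hsdef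
  set c := (Real.sqrt (2 * Real.pi * ξ ^ 2))⁻¹ with hcdef
  have step1 : ∫ x in Ioi a, gaussianPDFReal μ ⟨ξ ^ 2, sq_nonneg ξ⟩ x
      = ∫ x in Ioi a, c * Real.exp (-((x - μ) / s) ^ 2) := by
    refine setIntegral_congr_fun measurableSet_Ioi fun x _ => ?_
    unfold gaussianPDFReal
    change (Real.sqrt (2 * Real.pi * ξ ^ 2))⁻¹ * Real.exp (-(x - μ) ^ 2 / (2 * ξ ^ 2)) = _
    congr 1
    congr 1
    rw [div_pow, mul_pow, Real.sq_sqrt (by norm_num : (0:ℝ) ≤ 2)]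
    rw [neg_div]
    ring_nf
  have step2 : ∫ x in Ioi a, c * Real.exp (-((x - μ) / s) ^ 2)
      = ∫ x in Ioi (a - μ), c * Real.exp (-(x / s) ^ 2) :=
    integral_Ioi_comp_sub (fun y => c * Real.exp (-(y / s) ^ 2)) a μ
  have step3 : ∫ x in Ioi (a - μ), c * Real.exp (-(x / s) ^ 2)
      = s * (c * erfcAux ((a - μ) / s)) := by
    have h := integral_comp_mul_right_Ioi (fun y => c * Real.exp (-y ^ 2)) (a - μ)
      (inv_pos.mpr hs)
    simp only [div_eq_mul_inv]
    rw [h]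
    rw [inv_inv, smul_eq_mul]
    congr 1
    rw [MeasureTheory.integral_const_mul]
    rfl
  rw [step1, step2, step3]
  have hsc : s * c = (Real.sqrt Real.pi)⁻¹ := by
    rw [hcdef, hsdef]
    rw [show 2 * Real.pi * ξ ^ 2 = 2 * (Real.pi * ξ ^ 2) by ring,
      Real.sqrt_mul (by norm_num : (0:ℝ) ≤ 2),
      Real.sqrt_mul Real.pi_pos.le, Real.sqrt_sq hξ.le]
    rw [mul_inv, mul_inv]
    field_simp
  have hπ : Real.sqrt Real.pi ≠ 0 := by
    positivity
  rw [erfc, ← mul_assoc, hsc]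
  show (Real.sqrt Real.pi)⁻¹ * erfcAux ((a - μ) / s)
      = 1 / 2 * (2 / Real.sqrt Real.pi * erfcAux ((a - μ) / s))
  field_simp
/-- The approximate coarse evolution map
`Φ_a(U; ν̄, μ̄, ξ̄) = (1/2)·erfc[(1/(ξ̄√2))·(ν̄(1−2U)/(1−ν̄) − μ̄)]`. -/
noncomputable def PhiA (U ν μ ξ : ℝ) : ℝ :=
  (1 / 2) * erfc ((1 / (ξ * Real.sqrt 2)) * (ν * (1 - 2 * U) / (1 - ν) - μ))

lemma erfc_nonneg (x : ℝ) : 0 ≤ erfc x := by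
  unfold erfc
  have := erfcAux_nonneg x
  have h2 : (0:ℝ) ≤ 2 / Real.sqrt Real.pi := by positivity
  exact mul_nonneg h2 this

lemma erfc_le_two (x : ℝ) : erfc x ≤ 2 := by
  unfold erfc
  have h1 : (2 / Real.sqrt Real.pi) * erfcAux x ≤ (2 / Real.sqrt Real.pi) * Real.sqrt Real.pi :=
    mul_le_mul_of_nonneg_left (erfcAux_le x) (by positivity)
  have hπ : Real.sqrt Real.pi ≠ 0 := by positivity
  calc (2 / Real.sqrt Real.pi) * ∫ t in Set.Ioi x, Real.exp (-t ^ 2)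
      ≤ (2 / Real.sqrt Real.pi) * Real.sqrt Real.pi := h1
    _ = 2 := by field_simp

lemma PhiA_mem (U ν μ ξ : ℝ) : PhiA U ν μ ξ ∈ Set.Icc (0:ℝ) 1 := by
  unfold PhiA
  constructor
  · have := erfc_nonneg ((1 / (ξ * Real.sqrt 2)) * (ν * (1 - 2 * U) / (1 - ν) - μ))
    linarith
  · have := erfc_le_two ((1 / (ξ * Real.sqrt 2)) * (ν * (1 - 2 * U) / (1 - ν) - μ))
    linarith

lemma contDiff_PhiA (ν μ ξ : ℝ) : ContDiff ℝ 2 (fun u => PhiA u ν μ ξ) := by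
  unfold PhiA
  refine contDiff_const.mul (contDiff_erfc.comp ?_)
  exact contDiff_const.mul (((contDiff_const.mul ((contDiff_const.sub
    (contDiff_const.mul contDiff_id)))).div_const _).sub contDiff_const)

/-- With `Q ~ N(μ̄, ξ̄²)` independent of `R`, `R` a.s. in `[0,1]`, and
`K` an upper bound for `|Φ_a''(·; ν, μ̄, ξ̄)|` on `[0,1]`, one has
`|P((1−ν)Q + ν(2R−1) > 0) − Φ_a(E[R])| ≤ (K/2)·Var[R]`. -/
theorem purchase_prob_close_to_coarse_map
    {Ω : Type*} [MeasureSpace Ω] [IsProbabilityMeasure (ℙ : Measure Ω)]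
    (ν μbar ξbar : ℝ) (hν : ν ∈ Set.Ioo (0 : ℝ) 1) (hξ : 0 < ξbar)
    (Q R : Ω → ℝ) (hQm : Measurable Q) (hRm : Measurable R)
    (hQ : Measure.map Q ℙ = gaussianReal μbar ⟨ξbar ^ 2, sq_nonneg ξbar⟩)
    (hIndep : IndepFun Q R ℙ)
    (hR01 : ∀ᵐ ω ∂ℙ, R ω ∈ Set.Icc (0 : ℝ) 1)
    (K : ℝ)
    (hK : ∀ U ∈ Set.Icc (0 : ℝ) 1,
      |iteratedDeriv 2 (fun u => PhiA u ν μbar ξbar) U| ≤ K) :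
    |(ℙ {ω | (1 - ν) * Q ω + ν * (2 * R ω - 1) > 0}).toReal -
        PhiA (∫ ω, R ω ∂ℙ) ν μbar ξbar| ≤ (K / 2) * variance R ℙ := by
  obtain ⟨hν0, hν1⟩ := hν
  have h1ν : (0:ℝ) < 1 - ν := by linarith
  set g : ℝ → ℝ := fun u => PhiA u ν μbar ξbar with hgdef
  set m : ℝ := ∫ ω, R ω ∂ℙ with hmdef
  have hgcont : Continuous g := (contDiff_PhiA ν μbar ξbar).continuous
  haveI : IsProbabilityMeasure (Measure.map R ℙ) := Measure.isProbabilityMeasure_map hRm.aemeasurable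
  haveI : IsProbabilityMeasure (gaussianReal μbar ⟨ξbar ^ 2, sq_nonneg ξbar⟩) :=
    instIsProbabilityMeasureGaussianReal μbar _
  -- Part B : probability equals expectation of PhiA ∘ R
  have hPB : (ℙ {ω | (1 - ν) * Q ω + ν * (2 * R ω - 1) > 0}).toReal
      = ∫ ω, g (R ω) ∂ℙ := by
    set S : Set (ℝ × ℝ) := {p : ℝ × ℝ | (1 - ν) * p.1 + ν * (2 * p.2 - 1) > 0} with hSdef
    have hSm : MeasurableSet S := measurableSet_lt measurable_const (by fun_prop)
    have hmap : Measure.map (fun ω => (Q ω, R ω)) ℙ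
        = (Measure.map Q ℙ).prod (Measure.map R ℙ) :=
      (indepFun_iff_map_prod_eq_prod_map_map hQm.aemeasurable hRm.aemeasurable).mp hIndep
    have hev : {ω | (1 - ν) * Q ω + ν * (2 * R ω - 1) > 0} = (fun ω => (Q ω, R ω)) ⁻¹' S := rfl
    have hslice : ∀ r : ℝ, (fun q => (q, r)) ⁻¹' S = Set.Ioi (ν * (1 - 2 * r) / (1 - ν)) := by
      intro r
      ext q
      simp only [Set.mem_preimage, hSdef, Set.mem_setOf_eq, Set.mem_Ioi, gt_iff_lt]
      rw [div_lt_iff₀ h1ν]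
      constructor <;> intro h <;> nlinarith
    have hval : ∀ r : ℝ, gaussianReal μbar ⟨ξbar ^ 2, sq_nonneg ξbar⟩
        (Set.Ioi (ν * (1 - 2 * r) / (1 - ν))) = ENNReal.ofReal (g r) := by
      intro r
      have ht := gauss_tail μbar hξ (ν * (1 - 2 * r) / (1 - ν))
      have hfin : gaussianReal μbar ⟨ξbar ^ 2, sq_nonneg ξbar⟩
          (Set.Ioi (ν * (1 - 2 * r) / (1 - ν))) ≠ ⊤ := measure_ne_top _ _
      rw [← ENNReal.ofReal_toReal hfin, ht]
      congr 1
      show (1:ℝ)/2 * erfc _ = PhiA r ν μbar ξbar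
      unfold PhiA
      congr 1
      ring
    rw [hev, ← Measure.map_apply (hQm.prodMk hRm) hSm, hmap, hQ,
      Measure.prod_apply_symm hSm]
    simp_rw [hslice, hval]
    have hgint : Integrable g (Measure.map R ℙ) := by
      refine Integrable.mono' (integrable_const 1) hgcont.aestronglyMeasurable ?_
      refine Filter.Eventually.of_forall fun r => ?_
      rw [Real.norm_eq_abs, abs_of_nonneg (PhiA_mem r ν μbar ξbar).1]
      exact (PhiA_mem r ν μbar ξbar).2
    rw [← ofReal_integral_eq_lintegral_ofReal hgint
      (Filter.Eventually.of_forall fun r => (PhiA_mem r ν μbar ξbar).1),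
      ENNReal.toReal_ofReal (integral_nonneg fun r => (PhiA_mem r ν μbar ξbar).1),
      integral_map hRm.aemeasurable hgcont.aestronglyMeasurable]
  -- Part C : Taylor estimate
  have hRint : Integrable R ℙ := by
    refine Integrable.mono' (integrable_const 1) hRm.aestronglyMeasurable ?_
    refine hR01.mono fun ω h => ?_
    rw [Real.norm_eq_abs, abs_le]
    exact ⟨by linarith [h.1], h.2⟩
  have hm01 : m ∈ Set.Icc (0:ℝ) 1 := by
    constructor
    · exact integral_nonneg_of_ae (hR01.mono fun ω h => h.1)
    · calc m ≤ ∫ _ω, (1:ℝ) ∂ℙ := integral_mono_ae hRint (integrable_const 1)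
              (hR01.mono fun ω h => h.2)
        _ = 1 := by simp
  have hMem : MemLp R 2 ℙ := by
    refine MemLp.of_bound hRm.aestronglyMeasurable 1 (hR01.mono fun ω h => ?_)
    rw [Real.norm_eq_abs, abs_le]
    exact ⟨by linarith [h.1], h.2⟩
  have hvar : variance R ℙ = ∫ ω, (R ω - m) ^ 2 ∂ℙ := by
    rw [variance_eq_integral hRm.aemeasurable]
  have hsq_int : Integrable (fun ω => (R ω - m) ^ 2) ℙ := by
    have := (hMem.sub (memLp_const m)).integrable_sq
    simpa [sq] using this
  have hgR_int : Integrable (fun ω => g (R ω)) ℙ := by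
    refine Integrable.mono' (integrable_const 1)
      (hgcont.measurable.comp hRm).aestronglyMeasurable
      (Filter.Eventually.of_forall fun ω => ?_)
    rw [Real.norm_eq_abs, abs_of_nonneg (PhiA_mem _ ν μbar ξbar).1]
    exact (PhiA_mem _ ν μbar ξbar).2
  have hdg_int : Integrable (fun ω => deriv g m * (R ω - m)) ℙ :=
    ((hRint.sub (integrable_const m)).const_mul _)
  have hzero : ∫ ω, (R ω - m) ∂ℙ = 0 := by
    rw [integral_sub hRint (integrable_const m)]
    simp [hmdef]
  have hsplit : (∫ ω, g (R ω) ∂ℙ) - g m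
      = ∫ ω, (g (R ω) - g m - deriv g m * (R ω - m)) ∂ℙ := by
    have h1 : Integrable (fun ω => g (R ω) - g m) ℙ := hgR_int.sub (integrable_const (g m))
    rw [integral_sub h1 hdg_int, integral_sub hgR_int (integrable_const (g m)),
      integral_const_mul, hzero]
    simp
  have hK0 : 0 ≤ K := le_trans (abs_nonneg _) (hK 0 (Set.left_mem_Icc.mpr zero_le_one))
  have hptwise : ∀ᵐ ω ∂ℙ, ‖g (R ω) - g m - deriv g m * (R ω - m)‖
      ≤ K / 2 * (R ω - m) ^ 2 := by
    refine hR01.mono fun ω h => ?_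
    rw [Real.norm_eq_abs]
    refine taylor_bound (contDiff_PhiA ν μbar ξbar) fun t ht => hK t ?_
    exact Set.uIcc_subset_Icc hm01 h ht
  rw [hPB]
  have habs : |(∫ ω, g (R ω) ∂ℙ) - g m| ≤ ∫ ω, K / 2 * (R ω - m) ^ 2 ∂ℙ := by
    rw [hsplit, ← Real.norm_eq_abs]
    exact norm_integral_le_of_norm_le (hsq_int.const_mul (K / 2)) hptwise
  calc |(∫ ω, g (R ω) ∂ℙ) - g m| ≤ ∫ ω, K / 2 * (R ω - m) ^ 2 ∂ℙ := habs
    _ = K / 2 * variance R ℙ := by rw [integral_const_mul, hvar]
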